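/- arXiv:1009.0473 — 2 statements merged into one kernel-verified Lean document; each statement's English description precedes it below -/
import Mathlib

section
/- Let β ∈ M_d(ℝ), α ∈ S_d^+, and define σ_t(α) := 2∫₀ᵗ e^{βs} α e^{βᵀ s} ds. Then for u ∈ S_d^{++}, the function ψ(t,u) := e^{βᵀ t}(u⁻¹ + σ_t(α))⁻¹ e^{β t} satisfies the matrix Riccati differential equation ∂ψ/∂t = -2ψ α ψ + ψβ + βᵀψ with ψ(0,u) = u. -/
open Matrix MeasureTheory

section SupDefs

attribute [local instance] Matrix.normedAddCommGroup Matrix.normedSpace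

/-- `σ_t(α) = 2 ∫₀ᵗ e^{β s} α e^{βᵀ s} ds`. -/
noncomputable def sigmaFlow {d : ℕ} (β α : Matrix (Fin d) (Fin d) ℝ) (t : ℝ) :
    Matrix (Fin d) (Fin d) ℝ :=
  (2 : ℝ) • ∫ s in (0 : ℝ)..t,
    NormedSpace.exp (s • β) * α * NormedSpace.exp (s • βᵀ)

/-- `ψ(t, u) = e^{βᵀ t} (u⁻¹ + σ_t(α))⁻¹ e^{β t}`. -/
noncomputable def riccatiPsi {d : ℕ} (β α : Matrix (Fin d) (Fin d) ℝ) (t : ℝ)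
    (u : Matrix (Fin d) (Fin d) ℝ) : Matrix (Fin d) (Fin d) ℝ :=
  NormedSpace.exp (t • βᵀ) * (u⁻¹ + sigmaFlow β α t)⁻¹ * NormedSpace.exp (t • β)

end SupDefs

noncomputable def mNG1 (d : ℕ) : NormedAddCommGroup (Matrix (Fin d) (Fin d) ℝ) :=
  Matrix.linftyOpNormedAddCommGroup

noncomputable def mNS1 (d : ℕ) :
    @NormedSpace ℝ (Matrix (Fin d) (Fin d) ℝ) _ (mNG1 d).toSeminormedAddCommGroup :=
  Matrix.linftyOpNormedSpace

noncomputable def mNG2 (d : ℕ) : NormedAddCommGroup (Matrix (Fin d) (Fin d) ℝ) :=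
  Matrix.normedAddCommGroup

noncomputable def mNS2 (d : ℕ) :
    @NormedSpace ℝ (Matrix (Fin d) (Fin d) ℝ) _ (mNG2 d).toSeminormedAddCommGroup :=
  Matrix.normedSpace

theorem transferDeriv {d : ℕ} {f : ℝ → Matrix (Fin d) (Fin d) ℝ}
    {f' : Matrix (Fin d) (Fin d) ℝ} {s : Set ℝ} {x : ℝ} :
    (letI := mNG1 d; letI := mNS1 d; HasDerivWithinAt f f' s x) ↔
      (letI := mNG2 d; letI := mNS2 d; HasDerivWithinAt f f' s x) := by
  exact Iff.rfl

section Linfty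

attribute [local instance] Matrix.linftyOpNormedAddCommGroup Matrix.linftyOpNormedSpace
  Matrix.linftyOpNormedRing Matrix.linftyOpNormedAlgebra

theorem lin_main {d : ℕ} (β α u : Matrix (Fin d) (Fin d) ℝ) (t : ℝ)
    (hinv : IsUnit (u⁻¹ + sigmaFlow β α t))
    (hσ : HasDerivWithinAt (sigmaFlow β α)
      ((2 : ℝ) • (NormedSpace.exp (t • β) * α * NormedSpace.exp (t • βᵀ)))
      (Set.Ici 0) t) :
    HasDerivWithinAt (fun s => riccatiPsi β α s u)
      (-(2 : ℝ) • (riccatiPsi β α t u * α * riccatiPsi β α t u) +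
        riccatiPsi β α t u * β + βᵀ * riccatiPsi β α t u)
      (Set.Ici 0) t := by
  set A : ℝ → Matrix (Fin d) (Fin d) ℝ := fun s => NormedSpace.exp (s • βᵀ) with hAdef
  set C : ℝ → Matrix (Fin d) (Fin d) ℝ := fun s => NormedSpace.exp (s • β) with hCdef
  have hA : HasDerivAt A (βᵀ * A t) t := hasDerivAt_exp_smul_const' βᵀ t
  have hC : HasDerivAt C (C t * β) t := hasDerivAt_exp_smul_const β t
  set g : ℝ → Matrix (Fin d) (Fin d) ℝ := fun s => u⁻¹ + sigmaFlow β α s with hgdef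
  have hg : HasDerivWithinAt g ((2 : ℝ) • (C t * α * A t)) (Set.Ici 0) t := hσ.const_add u⁻¹
  obtain ⟨x, hx⟩ := id hinv
  have hxu : (↑x : Matrix (Fin d) (Fin d) ℝ) = g t := hx
  have hM : HasDerivWithinAt (fun s => Ring.inverse (g s))
      (-(Ring.inverse (g t) * ((2 : ℝ) • (C t * α * A t)) * Ring.inverse (g t)))
      (Set.Ici 0) t := by
    have h1 := hasFDerivAt_ringInverse (𝕜 := ℝ) x
    rw [hxu] at h1
    have h2 := h1.comp_hasDerivWithinAt t hg
    simp only [Function.comp_def, ContinuousLinearMap.neg_apply,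
      ContinuousLinearMap.mulLeftRight_apply, Matrix.coe_units_inv,
      Matrix.nonsing_inv_eq_ringInverse] at h2
    rw [hxu] at h2
    exact h2
  have hψ := (hA.hasDerivWithinAt.mul hM).mul hC.hasDerivWithinAt
  have heq : (fun s => riccatiPsi β α s u) = fun s => A s * Ring.inverse (g s) * C s := by
    funext s
    rw [riccatiPsi, Matrix.nonsing_inv_eq_ringInverse]
  rw [heq]
  refine hψ.congr_deriv ?_
  symm
  have hMg : (u⁻¹ + sigmaFlow β α t)⁻¹ = Ring.inverse (g t) :=
    Matrix.nonsing_inv_eq_ringInverse _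
  simp only [riccatiPsi, hMg, hgdef]
  set M := Ring.inverse (g t)
  show -(2:ℝ) • (A t * M * C t * α * (A t * M * C t)) + A t * M * C t * β + βᵀ * (A t * M * C t)
      = (βᵀ * A t * M + A t * -(M * ((2:ℝ) • (C t * α * A t)) * M)) * C t + A t * M * (C t * β)
  simp only [mul_assoc, add_mul, mul_add, neg_mul, mul_neg, Matrix.smul_mul, Matrix.mul_smul,
    neg_smul]
  abel

theorem lin_exp_cont {d : ℕ} (γ : Matrix (Fin d) (Fin d) ℝ) :
    Continuous fun s : ℝ => NormedSpace.exp (s • γ) :=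
  continuous_iff_continuousAt.mpr fun s => (hasDerivAt_exp_smul_const γ s).continuousAt

end Linfty

attribute [local instance] Matrix.normedAddCommGroup Matrix.normedSpace

noncomputable def quadCLM {d : ℕ} (x : Fin d → ℝ) : Matrix (Fin d) (Fin d) ℝ →L[ℝ] ℝ :=
  LinearMap.toContinuousLinearMap
    { toFun := fun M => x ⬝ᵥ M *ᵥ x
      map_add' := fun M N => by simp [add_mulVec, dotProduct_add]
      map_smul' := fun c M => by simp [smul_mulVec, dotProduct_smul]
      }

noncomputable def transCLM {d : ℕ} :
    Matrix (Fin d) (Fin d) ℝ →L[ℝ] Matrix (Fin d) (Fin d) ℝ :=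
  LinearMap.toContinuousLinearMap
    { toFun := fun M => Mᵀ
      map_add' := fun M N => by simp
      map_smul' := fun c M => by simp }

theorem stmt_8 {d : ℕ} (β α u : Matrix (Fin d) (Fin d) ℝ)
    (hα : α.PosSemidef) (hu : u.PosDef) :
    riccatiPsi β α 0 u = u ∧
    ∀ t : ℝ, 0 ≤ t →
      HasDerivWithinAt (fun s => riccatiPsi β α s u)
        (-(2 : ℝ) • (riccatiPsi β α t u * α * riccatiPsi β α t u) +
          riccatiPsi β α t u * β + βᵀ * riccatiPsi β α t u)
        (Set.Ici 0) t := by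
  have hudet : IsUnit u.det := isUnit_iff_ne_zero.mpr hu.det_pos.ne'
  constructor
  · rw [riccatiPsi, sigmaFlow]
    simp [NormedSpace.exp_zero, Matrix.nonsing_inv_nonsing_inv u hudet]
  intro t ht
  set f : ℝ → Matrix (Fin d) (Fin d) ℝ :=
    fun s => NormedSpace.exp (s • β) * α * NormedSpace.exp (s • βᵀ) with hfdef
  have hexp : ∀ γ : Matrix (Fin d) (Fin d) ℝ,
      Continuous fun s : ℝ => NormedSpace.exp (s • γ) := by
    intro γ
    letI := Matrix.linftyOpNormedRing (n := Fin d) (α := ℝ)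
    letI := Matrix.linftyOpNormedAlgebra (R := ℝ) (n := Fin d) (α := ℝ)
    exact lin_exp_cont γ
  have hc : Continuous f := (((hexp β).mul continuous_const).mul (hexp βᵀ))
  haveI : TopologicalSpace.PseudoMetrizableSpace (Matrix (Fin d) (Fin d) ℝ) :=
    inferInstanceAs (TopologicalSpace.PseudoMetrizableSpace (Fin d → Fin d → ℝ))
  -- derivative of sigmaFlow (sup world)
  have hσ : HasDerivAt (sigmaFlow β α) ((2 : ℝ) • f t) t := by
    unfold sigmaFlow
    exact (intervalIntegral.integral_hasDerivAt_right (hc.intervalIntegrable 0 t)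
      (hc.stronglyMeasurable.stronglyMeasurableAtFilter) hc.continuousAt).const_smul (2:ℝ)
  -- pointwise symmetry and positivity of f
  have hT : ∀ s : ℝ, NormedSpace.exp (s • βᵀ) = (NormedSpace.exp (s • β))ᵀ := by
    intro s
    rw [← Matrix.transpose_smul, Matrix.exp_transpose]
  have hfsymm : ∀ s : ℝ, (f s)ᵀ = f s := by
    intro s
    have hαt : αᵀ = α := hα.isHermitian.eq
    rw [hfdef]
    simp only [Matrix.transpose_mul, hT, Matrix.transpose_transpose, hαt]
    rw [mul_assoc]
  have hint := hc.intervalIntegrable (μ := volume) 0 t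
  have hPSD : (sigmaFlow β α t).PosSemidef := by
    refine posSemidef_iff_dotProduct_mulVec.mpr ⟨?_, ?_⟩
    · show (sigmaFlow β α t)ᴴ = _
      rw [sigmaFlow, Matrix.conjTranspose_smul]
      congr 1
      have h1 : (∫ s in (0:ℝ)..t, f s)ᴴ = transCLM (∫ s in (0:ℝ)..t, f s) := rfl
      rw [h1]
      refine (transCLM.intervalIntegral_comp_comm hint).symm.trans ?_
      refine intervalIntegral.integral_congr fun s _ => ?_
      show (f s)ᵀ = f s
      exact hfsymm s
    · intro x
      show (0:ℝ) ≤ star x ⬝ᵥ (sigmaFlow β α t) *ᵥ x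
      have h1 : star x ⬝ᵥ (sigmaFlow β α t) *ᵥ x
          = (2:ℝ) * ∫ s in (0:ℝ)..t, star x ⬝ᵥ (f s) *ᵥ x := by
        rw [sigmaFlow]
        rw [Matrix.smul_mulVec, dotProduct_smul, smul_eq_mul]
        congr 1
        have h2 : star x ⬝ᵥ (∫ s in (0:ℝ)..t, f s) *ᵥ x
            = quadCLM (star x) (∫ s in (0:ℝ)..t, f s) := rfl
        rw [h2]
        refine ((quadCLM (star x)).intervalIntegral_comp_comm hint).symm.trans ?_
        rfl
      rw [h1]
      have h3 : ∀ s : ℝ, 0 ≤ star x ⬝ᵥ (f s) *ᵥ x := by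
        intro s
        have := (hα.mul_mul_conjTranspose_same (NormedSpace.exp (s • β))).dotProduct_mulVec_nonneg x
        simpa [hfdef, hT s, Matrix.conjTranspose_eq_transpose_of_trivial] using this
      have h4 := intervalIntegral.integral_nonneg (μ := volume) ht (fun s _ => h3 s)
      linarith
  have hposdef : (u⁻¹ + sigmaFlow β α t).PosDef := hu.inv.add_posSemidef hPSD
  have hinv : IsUnit (u⁻¹ + sigmaFlow β α t) :=
    (Matrix.isUnit_iff_isUnit_det _).mpr (isUnit_iff_ne_zero.mpr hposdef.det_pos.ne')
  exact transferDeriv.mp (lin_main β α u t hinv (transferDeriv.mpr hσ.hasDerivWithinAt))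
end

section
/- Let β ∈ M_d(ℝ), α ∈ S_d^+, p ≥ 0, and define σ_t(α) := 2∫₀ᵗ e^{βs} α e^{βᵀ s} ds and ψ(t,u) := e^{βᵀ t}(u⁻¹ + σ_t(α))⁻¹ e^{β t} for u ∈ S_d^{++}. Then φ(t,u) := p · log det(I + u σ_t(α)) satisfies ∂φ/∂t = 2p · tr(α ψ(t,u)) with φ(0,u) = 0. -/
set_option synthInstance.maxHeartbeats 1000000
set_option maxHeartbeats 1000000


open Matrix MeasureTheory

attribute [local instance] Matrix.normedAddCommGroup Matrix.normedSpace

/-- `φ(t, u) = p log det (I + u σ_t(α))`. -/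
noncomputable def riccatiPhi {d : ℕ} (p : ℝ) (β α : Matrix (Fin d) (Fin d) ℝ) (t : ℝ)
    (u : Matrix (Fin d) (Fin d) ℝ) : ℝ :=
  p * Real.log (1 + u * sigmaFlow β α t).det

namespace RiccatiAux

variable {d : ℕ}

/-! ### Jacobi's formula -/

noncomputable def detCMM (d : ℕ) :
    ContinuousMultilinearMap ℝ (fun _ : Fin d => Fin d → ℝ) ℝ where
  toMultilinearMap :=
    (Matrix.detRowAlternating : (Fin d → ℝ) [⋀^Fin d]→ₗ[ℝ] ℝ).toMultilinearMap
  cont := by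
    show Continuous fun M : Matrix (Fin d) (Fin d) ℝ => M.det
    exact Continuous.matrix_det continuous_id

lemma detCMM_apply (M : Matrix (Fin d) (Fin d) ℝ) : detCMM d M = M.det := rfl

lemma det_updateRow_eq_sum (M : Matrix (Fin d) (Fin d) ℝ) (j : Fin d)
    (v : Fin d → ℝ) :
    (M.updateRow j v).det = ∑ i, v i * (M.updateRow j (Pi.single i 1)).det := by
  have key : ∀ b : Fin d → ℝ, (M.updateRow j b).det = Matrix.cramer Mᵀ b j := by
    intro b
    rw [Matrix.cramer_apply, Matrix.updateCol_transpose, Matrix.det_transpose]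
  let L : (Fin d → ℝ) →ₗ[ℝ] ℝ := (LinearMap.proj j).comp (Matrix.cramer Mᵀ)
  have hL : ∀ b, (M.updateRow j b).det = L b := fun b => key b
  rw [hL, LinearMap.pi_apply_eq_sum_univ L v]
  refine Finset.sum_congr rfl fun i _ => ?_
  have hsingle : (Pi.single i 1 : Fin d → ℝ) = fun k => if i = k then 1 else 0 :=
    funext fun k => by simp [Pi.single_apply, eq_comm]
  rw [smul_eq_mul, ← hL, hsingle]

lemma trace_adjugate_mul (M B : Matrix (Fin d) (Fin d) ℝ) :
    (M.adjugate * B).trace = ∑ j, (M.updateRow j (B j)).det := by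
  have : ∀ i k : Fin d, M.adjugate i k = (M.updateRow k (Pi.single i 1)).det :=
    fun i k => Matrix.adjugate_apply M i k
  rw [Matrix.trace]
  simp_rw [Matrix.diag_apply, Matrix.mul_apply, this]
  rw [Finset.sum_comm]
  refine Finset.sum_congr rfl fun k _ => ?_
  rw [det_updateRow_eq_sum]
  refine Finset.sum_congr rfl fun i _ => ?_
  ring

lemma jacobi {A : ℝ → Matrix (Fin d) (Fin d) ℝ} {A' : Matrix (Fin d) (Fin d) ℝ}
    {t : ℝ} (h : HasDerivAt A A' t) :
    HasDerivAt (fun s => (A s).det) ((Matrix.adjugate (A t) * A').trace) t := by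
  have h1 : HasFDerivAt (detCMM d) ((detCMM d).linearDeriv (A t)) (A t) :=
    (detCMM d).hasFDerivAt (A t)
  have h2 := h1.comp_hasDerivAt t h
  have h3 : HasDerivAt (fun s => (A s).det) (((detCMM d).linearDeriv (A t)) A') t := h2
  convert h3 using 1
  rw [trace_adjugate_mul]
  exact ((detCMM d).linearDeriv_apply (A t) A').symm

/-! ### Continuity and FTC facts -/

lemma exp_path_continuous (β : Matrix (Fin d) (Fin d) ℝ) :
    Continuous fun s : ℝ => NormedSpace.exp (s • β) := by
  letI : NormedAddCommGroup (Matrix (Fin d) (Fin d) ℝ) := Matrix.linftyOpNormedAddCommGroup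
  letI : SeminormedRing (Matrix (Fin d) (Fin d) ℝ) := Matrix.linftyOpSemiNormedRing
  letI : NormedRing (Matrix (Fin d) (Fin d) ℝ) := Matrix.linftyOpNormedRing
  letI : NormedSpace ℝ (Matrix (Fin d) (Fin d) ℝ) := Matrix.linftyOpNormedSpace
  letI : NormedAlgebra ℝ (Matrix (Fin d) (Fin d) ℝ) := Matrix.linftyOpNormedAlgebra
  exact continuous_iff_continuousAt.2 fun t =>
    (hasDerivAt_exp_smul_const β t).continuousAt

lemma integrand_continuous (β α : Matrix (Fin d) (Fin d) ℝ) :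
    Continuous fun s : ℝ =>
      NormedSpace.exp (s • β) * α * NormedSpace.exp (s • βᵀ) :=
  ((exp_path_continuous β).matrix_mul continuous_const).matrix_mul
    (exp_path_continuous βᵀ)

lemma sigmaFlow_hasDerivAt (β α : Matrix (Fin d) (Fin d) ℝ) (t : ℝ) :
    HasDerivAt (sigmaFlow β α)
      ((2 : ℝ) • (NormedSpace.exp (t • β) * α * NormedSpace.exp (t • βᵀ))) t :=
  (((integrand_continuous β α).integral_hasStrictDerivAt 0 t).hasDerivAt).const_smul (2 : ℝ)

lemma exp_smul_transpose (β : Matrix (Fin d) (Fin d) ℝ) (s : ℝ) :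
    NormedSpace.exp (s • βᵀ) = (NormedSpace.exp (s • β))ᵀ := by
  rw [← Matrix.transpose_smul, Matrix.exp_transpose]

lemma clm_integral_comm (L : Matrix (Fin d) (Fin d) ℝ →L[ℝ] Matrix (Fin d) (Fin d) ℝ)
    {f : ℝ → Matrix (Fin d) (Fin d) ℝ} (hf : Continuous f) (a b : ℝ) :
    (∫ s in a..b, L (f s)) = L (∫ s in a..b, f s) :=
  L.intervalIntegral_comp_comm (hf.intervalIntegrable a b)

lemma clm_integral_comm' (L : Matrix (Fin d) (Fin d) ℝ →L[ℝ] ℝ)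
    {f : ℝ → Matrix (Fin d) (Fin d) ℝ} (hf : Continuous f) (a b : ℝ) :
    (∫ s in a..b, L (f s)) = L (∫ s in a..b, f s) :=
  L.intervalIntegral_comp_comm (hf.intervalIntegrable a b)

noncomputable def transposeCLM (d : ℕ) :
    Matrix (Fin d) (Fin d) ℝ →L[ℝ] Matrix (Fin d) (Fin d) ℝ :=
  LinearMap.toContinuousLinearMap
    (Matrix.transposeLinearEquiv (Fin d) (Fin d) ℝ ℝ).toLinearMap

@[simp] lemma transposeCLM_apply (M : Matrix (Fin d) (Fin d) ℝ) :
    transposeCLM d M = Mᵀ := rfl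

/-- quadratic-form linear map `M ↦ x ⬝ᵥ M *ᵥ x`. -/
noncomputable def quadCLM (x : Fin d → ℝ) : Matrix (Fin d) (Fin d) ℝ →L[ℝ] ℝ :=
  LinearMap.toContinuousLinearMap
  { toFun := fun M : Matrix (Fin d) (Fin d) ℝ => x ⬝ᵥ (M *ᵥ x)
    map_add' := fun M N => by simp [Matrix.add_mulVec, dotProduct_add]
    map_smul' := fun c M => by simp [Matrix.smul_mulVec, dotProduct_smul] }

@[simp] lemma quadCLM_apply (x : Fin d → ℝ) (M : Matrix (Fin d) (Fin d) ℝ) :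
    quadCLM x M = x ⬝ᵥ (M *ᵥ x) := rfl

lemma sigmaFlow_posSemidef (β α : Matrix (Fin d) (Fin d) ℝ) (hα : α.PosSemidef)
    {t : ℝ} (ht : 0 ≤ t) : (sigmaFlow β α t).PosSemidef := by
  set f : ℝ → Matrix (Fin d) (Fin d) ℝ :=
    fun s => NormedSpace.exp (s • β) * α * NormedSpace.exp (s • βᵀ) with hfdef
  have hfc : Continuous f := integrand_continuous β α
  have hαT : αᵀ = α := by
    have := hα.isHermitian
    rwa [Matrix.IsHermitian, Matrix.conjTranspose_eq_transpose_of_trivial] at this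
  refine Matrix.posSemidef_iff_dotProduct_mulVec.mpr ⟨?_, ?_⟩
  · -- Hermitian
    show (sigmaFlow β α t)ᴴ = sigmaFlow β α t
    rw [Matrix.conjTranspose_eq_transpose_of_trivial]
    have hsymm : ∀ s : ℝ, (f s)ᵀ = f s := by
      intro s
      rw [hfdef]
      simp only [Matrix.transpose_mul, exp_smul_transpose, Matrix.transpose_transpose, hαT]
      rw [← Matrix.mul_assoc]
    unfold sigmaFlow
    rw [Matrix.transpose_smul]
    congr 1
    calc (∫ s in (0:ℝ)..t, f s)ᵀ = transposeCLM d (∫ s in (0:ℝ)..t, f s) := rfl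
      _ = ∫ s in (0:ℝ)..t, transposeCLM d (f s) := (clm_integral_comm _ hfc 0 t).symm
      _ = ∫ s in (0:ℝ)..t, f s := by
          refine intervalIntegral.integral_congr fun s _ => ?_
          rw [transposeCLM_apply, hsymm]
  · -- nonneg quadratic form
    intro x
    have key : (star x : Fin d → ℝ) ⬝ᵥ (sigmaFlow β α t *ᵥ x)
        = 2 * ∫ s in (0:ℝ)..t, x ⬝ᵥ (f s *ᵥ x) := by
      rw [star_trivial]
      have h1 : x ⬝ᵥ (sigmaFlow β α t *ᵥ x) = quadCLM x (sigmaFlow β α t) := rfl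
      rw [h1]
      unfold sigmaFlow
      rw [_root_.map_smul, smul_eq_mul]
      congr 1
      rw [← clm_integral_comm' (quadCLM x) hfc 0 t]
      exact intervalIntegral.integral_congr fun s _ => rfl
    rw [key]
    have hnonneg : ∀ s : ℝ, 0 ≤ x ⬝ᵥ (f s *ᵥ x) := by
      intro s
      have heq : x ⬝ᵥ (f s *ᵥ x)
          = ((NormedSpace.exp (s • β))ᵀ *ᵥ x) ⬝ᵥ (α *ᵥ ((NormedSpace.exp (s • β))ᵀ *ᵥ x)) := by
        rw [hfdef]
        simp only [exp_smul_transpose, ← Matrix.mulVec_mulVec, Matrix.dotProduct_mulVec,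
          Matrix.mulVec_transpose, Matrix.vecMul_vecMul]
      rw [heq]
      have := hα.dotProduct_mulVec_nonneg ((NormedSpace.exp (s • β))ᵀ *ᵥ x)
      rwa [star_trivial] at this
    have : 0 ≤ ∫ s in (0:ℝ)..t, x ⬝ᵥ (f s *ᵥ x) :=
      intervalIntegral.integral_nonneg ht fun s _ => hnonneg s
    linarith

noncomputable def mulLeftCLM (u : Matrix (Fin d) (Fin d) ℝ) :
    Matrix (Fin d) (Fin d) ℝ →L[ℝ] Matrix (Fin d) (Fin d) ℝ :=
  LinearMap.toContinuousLinearMap (LinearMap.mulLeft ℝ u)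

@[simp] lemma mulLeftCLM_apply (u M : Matrix (Fin d) (Fin d) ℝ) :
    mulLeftCLM u M = u * M := rfl

end RiccatiAux

open RiccatiAux in
theorem stmt_9 {d : ℕ} (β α u : Matrix (Fin d) (Fin d) ℝ) (p : ℝ) (hp : 0 ≤ p)
    (hα : α.PosSemidef) (hu : u.PosDef) :
    riccatiPhi p β α 0 u = 0 ∧
    ∀ t : ℝ, 0 ≤ t →
      HasDerivWithinAt (fun s => riccatiPhi p β α s u)
        (2 * p * (α * riccatiPsi β α t u).trace) (Set.Ici 0) t := by
  constructor
  · unfold riccatiPhi sigmaFlow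
    rw [intervalIntegral.integral_same]
    simp
  intro t ht
  set E : Matrix (Fin d) (Fin d) ℝ := NormedSpace.exp (t • β) with hE
  set F : Matrix (Fin d) (Fin d) ℝ := E * α * NormedSpace.exp (t • βᵀ) with hF
  set σ : Matrix (Fin d) (Fin d) ℝ := sigmaFlow β α t with hσ
  set B : Matrix (Fin d) (Fin d) ℝ := u⁻¹ + σ with hB
  have hσpsd : σ.PosSemidef := sigmaFlow_posSemidef β α hα ht
  have hBpd : B.PosDef := hu.inv.add_posSemidef hσpsd
  have hudet : IsUnit u.det := hu.det_pos.ne'.isUnit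
  have hAeq : 1 + u * σ = u * B := by
    rw [hB, Matrix.mul_add, Matrix.mul_nonsing_inv u hudet]
  have hdetA : (1 + u * σ).det = u.det * B.det := by rw [hAeq, Matrix.det_mul]
  have hdetA_pos : 0 < (1 + u * σ).det := by
    rw [hdetA]; exact mul_pos hu.det_pos hBpd.det_pos
  -- derivative of s ↦ 1 + u * sigmaFlow β α s
  have hAderiv : HasDerivAt (fun s => 1 + u * sigmaFlow β α s)
      (u * ((2 : ℝ) • F)) t := by
    have h1 := (mulLeftCLM u).hasFDerivAt.comp_hasDerivAt t (sigmaFlow_hasDerivAt β α t)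
    exact h1.const_add (1 : Matrix (Fin d) (Fin d) ℝ)
  have hdet : HasDerivAt (fun s => (1 + u * sigmaFlow β α s).det)
      ((Matrix.adjugate (1 + u * σ) * (u * ((2 : ℝ) • F))).trace) t := jacobi hAderiv
  have hlog := (hdet.log hdetA_pos.ne').const_mul p
  have hval : p * ((Matrix.adjugate (1 + u * σ) * (u * ((2 : ℝ) • F))).trace
      / (1 + u * σ).det) = 2 * p * (α * riccatiPsi β α t u).trace := by
    have hinv : (1 + u * σ)⁻¹ = ((1 + u * σ).det)⁻¹ • Matrix.adjugate (1 + u * σ) := by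
      rw [Matrix.inv_def, Ring.inverse_eq_inv']
    have htr : (Matrix.adjugate (1 + u * σ) * (u * ((2 : ℝ) • F))).trace
        / (1 + u * σ).det = ((1 + u * σ)⁻¹ * (u * ((2 : ℝ) • F))).trace := by
      rw [hinv, Matrix.smul_mul, Matrix.trace_smul, smul_eq_mul, div_eq_inv_mul]
    rw [htr]
    have hAinv : (1 + u * σ)⁻¹ * u = B⁻¹ := by
      rw [hAeq, Matrix.mul_inv_rev, Matrix.mul_assoc, Matrix.nonsing_inv_mul u hudet,
        Matrix.mul_one]
    have hres : (1 + u * σ)⁻¹ * (u * ((2 : ℝ) • F)) = (2 : ℝ) • (B⁻¹ * F) := by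
      rw [mul_smul_comm, mul_smul_comm, ← Matrix.mul_assoc, hAinv]
    rw [hres, Matrix.trace_smul, smul_eq_mul]
    have hψ : riccatiPsi β α t u = Eᵀ * B⁻¹ * E := by
      rw [riccatiPsi, exp_smul_transpose, ← hE, ← hσ, ← hB]
    have hcyc : (B⁻¹ * F).trace = (α * riccatiPsi β α t u).trace := by
      rw [hψ, hF, exp_smul_transpose, ← hE]
      rw [show B⁻¹ * (E * α * Eᵀ) = (B⁻¹ * E * α) * Eᵀ by
        simp only [Matrix.mul_assoc]]
      rw [Matrix.trace_mul_comm, show Eᵀ * (B⁻¹ * E * α) = (Eᵀ * B⁻¹ * E) * α by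
        simp only [Matrix.mul_assoc]]
      rw [Matrix.trace_mul_comm]
    rw [hcyc]
    ring
  rw [← hval]
  exact hlog.hasDerivWithinAt
end
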